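/- Let Γ and Δ be finite nonempty sets, let G be a transitive subgroup of the symmetric group on Γ and H a transitive subgroup of the symmetric group on Δ. Let W be the set of permutations σ of Γ × Δ for which there exist h ∈ H and a function f : Δ → G such that σ(γ,δ) = (f(δ)(γ), h(δ)) for all (γ,δ). Then W is a (transitive) subgroup of the symmetric group on Γ × Δ (the imprimitive wreath product G ≀ H), and W has the OB property if and only if both G and H have the OB property. -/

import Mathlib

/-- A relation on `Ω` is invariant under a group `G` of permutations of `Ω`. -/
def PermInvariant {Ω : Type*} (G : Subgroup (Equiv.Perm Ω)) (r : Ω → Ω → Prop) : Prop :=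
  ∀ σ ∈ G, ∀ x y : Ω, r x y ↔ r (σ x) (σ y)

/-- A permutation group `G` on `Ω` has the OB property if any two `G`-invariant
equivalence relations on `Ω` commute. -/
def PermOB {Ω : Type*} (G : Subgroup (Equiv.Perm Ω)) : Prop :=
  ∀ r s : Ω → Ω → Prop, Equivalence r → Equivalence s →
    PermInvariant G r → PermInvariant G s →
    ∀ x z : Ω, (∃ y, r x y ∧ s y z) ↔ (∃ y, s x y ∧ r y z)

/-- The basic wreath-type permutation of `Γ × Δ`. -/
def wrPerm {Γ Δ : Type*} (f : Δ → Equiv.Perm Γ) (h : Equiv.Perm Δ) :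
    Equiv.Perm (Γ × Δ) where
  toFun p := (f p.2 p.1, h p.2)
  invFun p := ((f (h.symm p.2)).symm p.1, h.symm p.2)
  left_inv p := by simp
  right_inv p := by simp

/-- The imprimitive wreath product as a subgroup of `Sym (Γ × Δ)`. -/
def wreathSubgroup {Γ Δ : Type*} (G : Subgroup (Equiv.Perm Γ))
    (H : Subgroup (Equiv.Perm Δ)) : Subgroup (Equiv.Perm (Γ × Δ)) where
  carrier := {σ : Equiv.Perm (Γ × Δ) | ∃ h ∈ H, ∃ f : Δ → Equiv.Perm Γ,
      (∀ δ : Δ, f δ ∈ G) ∧ ∀ (γ : Γ) (δ : Δ), σ (γ, δ) = (f δ γ, h δ)}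
  one_mem' := ⟨1, one_mem H, fun _ => 1, fun _ => one_mem G, fun _ _ => rfl⟩
  mul_mem' := by
    rintro a b ⟨h₁, hh₁, f₁, hf₁, he₁⟩ ⟨h₂, hh₂, f₂, hf₂, he₂⟩
    refine ⟨h₁ * h₂, mul_mem hh₁ hh₂, fun δ => f₁ (h₂ δ) * f₂ δ,
      fun δ => mul_mem (hf₁ _) (hf₂ _), fun γ δ => ?_⟩
    rw [Equiv.Perm.mul_apply, he₂, he₁]
    rfl
  inv_mem' := by
    rintro a ⟨h, hh, f, hf, he⟩
    refine ⟨h⁻¹, inv_mem hh, fun δ => (f (h⁻¹ δ))⁻¹, fun δ => inv_mem (hf _),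
      fun γ δ => ?_⟩
    apply a.injective
    rw [(by simp : a (a⁻¹ (γ, δ)) = (γ, δ)), he]
    simp

/-- Decomposition of a wreath-invariant equivalence relation as a product. -/
lemma wreath_decomp {Γ Δ : Type*} [Nonempty Γ] [Nonempty Δ]
    (G : Subgroup (Equiv.Perm Γ)) (H : Subgroup (Equiv.Perm Δ))
    (hG : ∀ γ γ' : Γ, ∃ g ∈ G, g γ = γ') (hH : ∀ δ δ' : Δ, ∃ h ∈ H, h δ = δ')
    (r : Γ × Δ → Γ × Δ → Prop) (er : Equivalence r)
    (hr : PermInvariant (wreathSubgroup G H) r) :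
    ∃ (s : Γ → Γ → Prop) (t : Δ → Δ → Prop),
      Equivalence s ∧ Equivalence t ∧ PermInvariant G s ∧ PermInvariant H t ∧
      ∀ γ δ γ' δ', r (γ, δ) (γ', δ') ↔ (s γ γ' ∧ t δ δ') := by
  classical
  obtain ⟨δ₀⟩ := (inferInstance : Nonempty Δ)
  obtain ⟨γ₀⟩ := (inferInstance : Nonempty Γ)
  have inv_fh : ∀ (f : Δ → Equiv.Perm Γ) (h : Equiv.Perm Δ),
      (∀ δ, f δ ∈ G) → h ∈ H →
      ∀ γ δ γ' δ', r (γ, δ) (γ', δ') ↔ r (f δ γ, h δ) (f δ' γ', h δ') :=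
    fun f h hf hh γ δ γ' δ' =>
      hr (wrPerm f h) ⟨h, hh, f, hf, fun _ _ => rfl⟩ (γ, δ) (γ', δ')
  have invh : ∀ (h : Equiv.Perm Δ), h ∈ H →
      ∀ γ δ γ' δ', r (γ, δ) (γ', δ') ↔ r (γ, h δ) (γ', h δ') := by
    intro h hh γ δ γ' δ'
    simpa using inv_fh (fun _ => 1) h (fun _ => one_mem G) hh γ δ γ' δ'
  have invg : ∀ (f : Δ → Equiv.Perm Γ), (∀ δ, f δ ∈ G) →
      ∀ γ δ γ' δ', r (γ, δ) (γ', δ') ↔ r (f δ γ, δ) (f δ' γ', δ') := by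
    intro f hf γ δ γ' δ'
    simpa using inv_fh f 1 hf (one_mem H) γ δ γ' δ'
  have uniform : ∀ (γ γ' : Γ) (δ : Δ), r (γ, δ₀) (γ', δ₀) ↔ r (γ, δ) (γ', δ) := by
    intro γ γ' δ
    obtain ⟨h, hh, hδ⟩ := hH δ₀ δ
    have := invh h hh γ δ₀ γ' δ₀
    rwa [hδ] at this
  have blocktotal : ∀ γ₁ δ γ₂ δ', δ ≠ δ' → r (γ₁, δ) (γ₂, δ') →
      ∀ a b, r (a, δ') (b, δ') := by
    intro γ₁ δ γ₂ δ' hne hrel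
    have key : ∀ c, r (γ₁, δ) (c, δ') := by
      intro c
      obtain ⟨g, hg, hgc⟩ := hG γ₂ c
      have := (invg (fun d => if d = δ' then g else 1)
        (fun d => by split <;> [exact hg; exact one_mem G])
        γ₁ δ γ₂ δ').mp hrel
      simpa [if_neg hne, hgc] using this
    intro a b
    exact er.trans (er.symm (key a)) (key b)
  refine ⟨fun γ γ' => r (γ, δ₀) (γ', δ₀), fun δ δ' => ∃ a b, r (a, δ) (b, δ'),
    ⟨fun γ => er.refl _, fun h => er.symm h, fun h1 h2 => er.trans h1 h2⟩,
    ?_, ?_, ?_, ?_⟩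
  · constructor
    · intro δ; exact ⟨γ₀, γ₀, er.refl _⟩
    · rintro δ δ' ⟨a, b, hab⟩; exact ⟨b, a, er.symm hab⟩
    · rintro δ δ' δ'' ⟨a, b, hab⟩ ⟨c, d, hcd⟩
      by_cases h1 : δ = δ'
      · subst h1; exact ⟨c, d, hcd⟩
      · have tot := blocktotal a δ b δ' h1 hab
        exact ⟨a, d, er.trans hab (er.trans (tot b c) hcd)⟩
  · intro g hg γ γ'
    exact invg (fun _ => g) (fun _ => hg) γ δ₀ γ' δ₀
  · intro h hh δ δ'
    constructor
    · rintro ⟨a, b, hab⟩; exact ⟨a, b, (invh h hh a δ b δ').mp hab⟩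
    · rintro ⟨a, b, hab⟩; exact ⟨a, b, (invh h hh a δ b δ').mpr hab⟩
  · intro γ δ γ' δ'
    constructor
    · intro hrel
      refine ⟨?_, γ, γ', hrel⟩
      by_cases h1 : δ = δ'
      · subst h1; exact (uniform γ γ' δ).mpr hrel
      · have tot := blocktotal γ' δ' γ δ (Ne.symm h1) (er.symm hrel)
        exact (uniform γ γ' δ).mpr (tot γ γ')
    · rintro ⟨hs, a, b, hab⟩
      by_cases h1 : δ = δ'
      · subst h1; exact (uniform γ γ' δ).mp hs
      · have totδ := blocktotal b δ' a δ (Ne.symm h1) (er.symm hab)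
        have totδ' := blocktotal a δ b δ' h1 hab
        exact er.trans (totδ γ a) (er.trans hab (totδ' b γ'))

/-- The imprimitive wreath product `G ≀ H`, realised as the set `W` of
permutations `σ` of `Γ × Δ` of the form `σ (γ, δ) = (f δ γ, h δ)` with `h ∈ H` and
`f : Δ → G`, is a transitive subgroup of `Sym(Γ × Δ)`, and it has the OB property
iff both `G` and `H` do. -/
theorem wreath_product_OB_iff {Γ Δ : Type*} [Fintype Γ] [Fintype Δ]
    [Nonempty Γ] [Nonempty Δ]
    (G : Subgroup (Equiv.Perm Γ)) (H : Subgroup (Equiv.Perm Δ))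
    (hG : ∀ γ γ' : Γ, ∃ g ∈ G, g γ = γ') (hH : ∀ δ δ' : Δ, ∃ h ∈ H, h δ = δ') :
    ∃ W : Subgroup (Equiv.Perm (Γ × Δ)),
      (W : Set (Equiv.Perm (Γ × Δ))) =
        {σ : Equiv.Perm (Γ × Δ) | ∃ h ∈ H, ∃ f : Δ → Equiv.Perm Γ,
          (∀ δ : Δ, f δ ∈ G) ∧ ∀ (γ : Γ) (δ : Δ), σ (γ, δ) = (f δ γ, h δ)} ∧
      (∀ p q : Γ × Δ, ∃ σ ∈ W, σ p = q) ∧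
      (PermOB W ↔ (PermOB G ∧ PermOB H)) := by
  refine ⟨wreathSubgroup G H, rfl, ?_, ?_⟩
  · rintro ⟨γ, δ⟩ ⟨γ', δ'⟩
    obtain ⟨g, hg, hgγ⟩ := hG γ γ'
    obtain ⟨h, hh, hhδ⟩ := hH δ δ'
    exact ⟨wrPerm (fun _ => g) h, ⟨h, hh, fun _ => g, fun _ => hg, fun _ _ => rfl⟩,
      by simp [wrPerm, hgγ, hhδ]⟩
  · constructor
    · intro hW
      obtain ⟨δ₀⟩ := (inferInstance : Nonempty Δ)
      obtain ⟨γ₀⟩ := (inferInstance : Nonempty Γ)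
      constructor
      · -- PermOB G
        intro s₁ s₂ e₁ e₂ i₁ i₂ γ γ''
        have liftEquiv : ∀ (s : Γ → Γ → Prop), Equivalence s →
            Equivalence (fun p q : Γ × Δ => s p.1 q.1 ∧ p.2 = q.2) :=
          fun s es => ⟨fun _ => ⟨es.refl _, rfl⟩,
            fun h => ⟨es.symm h.1, h.2.symm⟩,
            fun h h' => ⟨es.trans h.1 h'.1, h.2.trans h'.2⟩⟩
        have liftInv : ∀ s : Γ → Γ → Prop, PermInvariant G s →
            PermInvariant (wreathSubgroup G H)
              (fun p q : Γ × Δ => s p.1 q.1 ∧ p.2 = q.2) := by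
          intro s is σ hσ p q
          obtain ⟨h, hh, f, hf, he⟩ := hσ
          obtain ⟨a, b⟩ := p; obtain ⟨c, d⟩ := q
          rw [he a b, he c d]
          dsimp only
          constructor
          · rintro ⟨h1, rfl⟩
            exact ⟨(is (f b) (hf b) a c).mp h1, rfl⟩
          · rintro ⟨h1, h2⟩
            have hbd : b = d := h.injective h2
            subst hbd
            exact ⟨(is (f b) (hf b) a c).mpr h1, rfl⟩
        have key := hW _ _ (liftEquiv s₁ e₁) (liftEquiv s₂ e₂)
          (liftInv s₁ i₁) (liftInv s₂ i₂) (γ, δ₀) (γ'', δ₀)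
        constructor
        · rintro ⟨γ', h1, h2⟩
          obtain ⟨⟨a, b⟩, ⟨h3, h4⟩, h5, _⟩ :=
            key.mp ⟨(γ', δ₀), ⟨h1, rfl⟩, h2, rfl⟩
          exact ⟨a, h3, h5⟩
        · rintro ⟨γ', h1, h2⟩
          obtain ⟨⟨a, b⟩, ⟨h3, h4⟩, h5, _⟩ :=
            key.mpr ⟨(γ', δ₀), ⟨h1, rfl⟩, h2, rfl⟩
          exact ⟨a, h3, h5⟩
      · -- PermOB H
        intro t₁ t₂ e₁ e₂ i₁ i₂ δ δ''
        have liftEquiv : ∀ (t : Δ → Δ → Prop), Equivalence t →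
            Equivalence (fun p q : Γ × Δ => t p.2 q.2) :=
          fun t et => ⟨fun _ => et.refl _, fun h => et.symm h,
            fun h h' => et.trans h h'⟩
        have liftInv : ∀ t : Δ → Δ → Prop, PermInvariant H t →
            PermInvariant (wreathSubgroup G H)
              (fun p q : Γ × Δ => t p.2 q.2) := by
          intro t it σ hσ p q
          obtain ⟨h, hh, f, hf, he⟩ := hσ
          obtain ⟨a, b⟩ := p; obtain ⟨c, d⟩ := q
          rw [he a b, he c d]
          exact it h hh b d
        have key := hW _ _ (liftEquiv t₁ e₁) (liftEquiv t₂ e₂)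
          (liftInv t₁ i₁) (liftInv t₂ i₂) (γ₀, δ) (γ₀, δ'')
        constructor
        · rintro ⟨δ', h1, h2⟩
          obtain ⟨⟨a, b⟩, h3, h4⟩ := key.mp ⟨(γ₀, δ'), h1, h2⟩
          exact ⟨b, h3, h4⟩
        · rintro ⟨δ', h1, h2⟩
          obtain ⟨⟨a, b⟩, h3, h4⟩ := key.mpr ⟨(γ₀, δ'), h1, h2⟩
          exact ⟨b, h3, h4⟩
    · rintro ⟨hOG, hOH⟩
      intro r r' er er' hr hr' x z
      obtain ⟨s, t, es, et, is, it, hiff⟩ := wreath_decomp G H hG hH r er hr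
      obtain ⟨s', t', es', et', is', it', hiff'⟩ := wreath_decomp G H hG hH r' er' hr'
      obtain ⟨γ, δ⟩ := x; obtain ⟨γ'', δ''⟩ := z
      constructor
      · rintro ⟨⟨γ', δ'⟩, h1, h2⟩
        rw [hiff] at h1; rw [hiff'] at h2
        obtain ⟨a, ha1, ha2⟩ := (hOG s s' es es' is is' γ γ'').mp ⟨γ', h1.1, h2.1⟩
        obtain ⟨b, hb1, hb2⟩ := (hOH t t' et et' it it' δ δ'').mp ⟨δ', h1.2, h2.2⟩
        exact ⟨(a, b), (hiff' _ _ _ _).mpr ⟨ha1, hb1⟩, (hiff _ _ _ _).mpr ⟨ha2, hb2⟩⟩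
      · rintro ⟨⟨γ', δ'⟩, h1, h2⟩
        rw [hiff'] at h1; rw [hiff] at h2
        obtain ⟨a, ha1, ha2⟩ := (hOG s s' es es' is is' γ γ'').mpr ⟨γ', h1.1, h2.1⟩
        obtain ⟨b, hb1, hb2⟩ := (hOH t t' et et' it it' δ δ'').mpr ⟨δ', h1.2, h2.2⟩
        exact ⟨(a, b), (hiff _ _ _ _).mpr ⟨ha1, hb1⟩, (hiff' _ _ _ _).mpr ⟨ha2, hb2⟩⟩
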